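/- Let A ∈ ℝ^{n×n} have all eigenvalues with nonnegative real part, B ∈ ℝ^{n×m} with (A,B) controllable, Q ∈ ℝ^{n×n} positive semidefinite with (A, Q^{1/2}) observable, and let P be a symmetric positive definite solution of the algebraic Riccati equation AᵀP + PA − PBBᵀP + Q = 0. Then the pair (A, BᵀP) is observable. -/

import Mathlib

open Matrix Polynomial
open scoped ComplexOrder

private lemma aux_rank_iff {ι : Type*} [Fintype ι] {k : ℕ} (M : Matrix ι (Fin k) ℝ) :
    M.rank = k ↔ ∀ x : Fin k → ℝ, M *ᵥ x = 0 → x = 0 := by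
  have hrn := LinearMap.finrank_range_add_finrank_ker M.mulVecLin
  rw [Module.finrank_pi, Fintype.card_fin] at hrn
  constructor
  · intro h x hx
    unfold Matrix.rank at h
    have hker : Module.finrank ℝ (LinearMap.ker M.mulVecLin) = 0 := by
      omega
    have : LinearMap.ker M.mulVecLin = ⊥ :=
      Submodule.finrank_eq_zero.mp hker
    have hmem : x ∈ LinearMap.ker M.mulVecLin := by
      simp [LinearMap.mem_ker, mulVecLin_apply, hx]
    rw [this] at hmem
    simpa using hmem
  · intro h
    have : LinearMap.ker M.mulVecLin = ⊥ := by
      rw [LinearMap.ker_eq_bot']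
      intro x hx
      exact h x (by simpa [mulVecLin_apply] using hx)
    have hker : Module.finrank ℝ (LinearMap.ker M.mulVecLin) = 0 := by
      rw [this]; simp
    unfold Matrix.rank
    omega

private lemma aux_map_mulVec_re_im {ι : Type*} [Fintype ι] {k : ℕ} (M : Matrix ι (Fin k) ℝ)
    (v : Fin k → ℂ) (h : (M.map Complex.ofReal) *ᵥ v = 0) :
    M *ᵥ (fun j => (v j).re) = 0 ∧ M *ᵥ (fun j => (v j).im) = 0 := by
  constructor <;> funext i <;>
  · have hi := congrFun h i
    simp only [mulVec, dotProduct, map_apply] at hi ⊢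
    have hre := congrArg Complex.re hi
    have him := congrArg Complex.im hi
    simp only [Complex.re_sum, Complex.im_sum, Complex.mul_re, Complex.mul_im,
      Complex.ofReal_re, Complex.ofReal_im, zero_mul, sub_zero, zero_add,
      Complex.zero_re, Complex.zero_im, Pi.zero_apply] at hre him
    first
    | simpa using hre
    | simpa using him

private lemma aux_re_quad {k : ℕ} (M : Matrix (Fin k) (Fin k) ℝ) (v : Fin k → ℂ) :
    (star v ⬝ᵥ ((M.map Complex.ofReal) *ᵥ v)).re
      = (fun i => (v i).re) ⬝ᵥ (M *ᵥ fun j => (v j).re)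
        + (fun i => (v i).im) ⬝ᵥ (M *ᵥ fun j => (v j).im) := by
  simp only [dotProduct, mulVec, map_apply, Pi.star_apply, Complex.star_def,
    Finset.mul_sum, Complex.re_sum, Complex.mul_re, Complex.mul_im,
    Complex.conj_re, Complex.conj_im, Complex.ofReal_re, Complex.ofReal_im,
    zero_mul, sub_zero, zero_add, ← Finset.sum_add_distrib]
  apply Finset.sum_congr rfl; intro i _
  apply Finset.sum_congr rfl; intro j _
  ring

private lemma aux_all_pow {n m : ℕ} (hn : 0 < n) (A : Matrix (Fin n) (Fin n) ℝ)
    (C : Matrix (Fin m) (Fin n) ℝ) (x : Fin n → ℝ)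
    (h : ∀ i : Fin n, (C * A ^ (i : ℕ)) *ᵥ x = 0) :
    ∀ k : ℕ, (C * A ^ k) *ᵥ x = 0 := by
  intro k
  have hdeg : (X ^ k %ₘ A.charpoly).natDegree < n := by
    by_cases h0 : (X ^ k %ₘ A.charpoly) = 0
    · simpa [h0] using hn
    · have := Polynomial.degree_modByMonic_lt (X ^ k) A.charpoly_monic
      rw [A.charpoly_degree_eq_dim] at this
      simp only [Fintype.card_fin] at this
      exact (Polynomial.natDegree_lt_iff_degree_lt h0).mpr (by exact_mod_cast this)
  have hpow := A.pow_eq_aeval_mod_charpoly k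
  rw [Polynomial.aeval_eq_sum_range' hdeg] at hpow
  rw [hpow, Matrix.mul_sum]
  have hterm : ∀ i ∈ Finset.range n, (C * (X ^ k %ₘ A.charpoly).coeff i • A ^ i) *ᵥ x = 0 := by
    intro i hi
    rw [Finset.mem_range] at hi
    rw [Matrix.mul_smul, smul_mulVec, h ⟨i, hi⟩]
    simp
  have hm : (∑ a ∈ Finset.range n, C * (X ^ k %ₘ A.charpoly).coeff a • A ^ a) *ᵥ x
      = ∑ a ∈ Finset.range n, (C * (X ^ k %ₘ A.charpoly).coeff a • A ^ a) *ᵥ x := by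
    induction (Finset.range n) using Finset.induction_on with
    | empty => simp [Matrix.zero_mulVec]
    | insert a s hnot ih => rw [Finset.sum_insert hnot, Finset.sum_insert hnot, Matrix.add_mulVec, ih]
  rw [hm]
  exact Finset.sum_eq_zero hterm

private lemma aux_eig_spectrum {k : ℕ} (M : Matrix (Fin k) (Fin k) ℂ) (μ : ℂ) (v : Fin k → ℂ)
    (hv : v ≠ 0) (h : M *ᵥ v = μ • v) : μ ∈ spectrum ℂ M := by
  have he : Module.End.HasEigenvalue (Matrix.toLinAlgEquiv' M) μ := by
    apply Module.End.hasEigenvalue_of_hasEigenvector (x := v)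
    refine ⟨?_, hv⟩
    rw [Module.End.mem_eigenspace_iff, Matrix.toLinAlgEquiv'_apply, h]
  rw [← AlgEquiv.spectrum_eq (Matrix.toLinAlgEquiv' (n := Fin k) (R := ℂ)) M]
  exact Module.End.hasEigenvalue_iff_mem_spectrum.mp he

private lemma aux_map_mapRingHom {ι κ : Type*} (M : Matrix ι κ ℝ) :
    M.map Complex.ofReal = M.map (Complex.ofRealHom : ℝ →+* ℂ) := rfl

theorem stmt_14 (n m : ℕ) (A : Matrix (Fin n) (Fin n) ℝ) (B : Matrix (Fin n) (Fin m) ℝ)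
    (hA : ∀ μ ∈ spectrum ℂ (A.map Complex.ofReal), 0 ≤ μ.re)
    (hctrb : (Matrix.of fun (i : Fin n) (q : Fin n × Fin m) =>
        (A ^ (q.1 : ℕ) * B) i q.2).rank = n)
    (Q : Matrix (Fin n) (Fin n) ℝ) (hQ : Q.PosSemidef)
    (hobsQ : (Matrix.of fun (q : Fin n × Fin n) (j : Fin n) =>
        (((hQ.1.eigenvectorUnitary : Matrix (Fin n) (Fin n) ℝ) *
          diagonal ((RCLike.ofReal : ℝ → ℝ) ∘ Real.sqrt ∘ hQ.1.eigenvalues) *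
          (star hQ.1.eigenvectorUnitary : Matrix (Fin n) (Fin n) ℝ)) * A ^ (q.1 : ℕ)) q.2 j).rank = n)
    (P : Matrix (Fin n) (Fin n) ℝ) (hP : P.PosDef)
    (hric : Aᵀ * P + P * A - P * B * Bᵀ * P + Q = 0) :
    (Matrix.of fun (q : Fin n × Fin m) (j : Fin n) =>
        ((Bᵀ * P) * A ^ (q.1 : ℕ)) q.2 j).rank = n := by
  rw [aux_rank_iff]
  intro x hx0
  by_contra hxne
  -- n must be positive
  rcases Nat.eq_zero_or_pos n with h0 | hn
  · subst h0
    exact hxne (funext fun i => absurd i.2 (by omega))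
  set C : Matrix (Fin m) (Fin n) ℝ := Bᵀ * P with hCdef
  -- rows of the observability matrix
  have hxk : ∀ i : Fin n, (C * A ^ (i : ℕ)) *ᵥ x = 0 := by
    intro i
    funext jm
    have := congrFun hx0 (i, jm)
    simpa [mulVec, dotProduct] using this
  have hall : ∀ k : ℕ, (C * A ^ k) *ᵥ x = 0 := aux_all_pow hn A C x hxk
  -- complexify
  set f : ℝ →+* ℂ := Complex.ofRealHom with hfdef
  set Ac := A.map Complex.ofReal with hAc
  set Cc := C.map Complex.ofReal with hCc
  set Pc := P.map Complex.ofReal with hPc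
  set Bc := B.map Complex.ofReal with hBc
  set Qc := Q.map Complex.ofReal with hQc
  have hmapmul : ∀ {a b c : ℕ} (M : Matrix (Fin a) (Fin b) ℝ) (N : Matrix (Fin b) (Fin c) ℝ),
      (M * N).map Complex.ofReal = M.map Complex.ofReal * N.map Complex.ofReal := by
    intro a b c M N
    rw [aux_map_mapRingHom, Matrix.map_mul]
    rfl
  have hmappow : ∀ k : ℕ, (A ^ k).map Complex.ofReal = Ac ^ k := by
    intro k
    rw [aux_map_mapRingHom]
    have := map_pow (Complex.ofRealHom.mapMatrix :
      Matrix (Fin n) (Fin n) ℝ →+* Matrix (Fin n) (Fin n) ℂ) A k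
    simpa [RingHom.mapMatrix_apply, hAc, aux_map_mapRingHom] using this
  set xc : Fin n → ℂ := fun j => (x j : ℂ) with hxc
  have hmapvec : ∀ {a : ℕ} (M : Matrix (Fin a) (Fin n) ℝ) (y : Fin n → ℝ),
      (M.map Complex.ofReal) *ᵥ (fun j => (y j : ℂ)) = fun i => ((M *ᵥ y) i : ℂ) := by
    intro a M y
    funext i
    exact (RingHom.map_mulVec Complex.ofRealHom M y i).symm
  -- the unobservable subspace over ℂ
  set U : Submodule ℂ (Fin n → ℂ) :=
    ⨅ k : ℕ, LinearMap.ker ((Cc * Ac ^ k).mulVecLin) with hU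
  have hmemU : ∀ w : Fin n → ℂ, w ∈ U ↔ ∀ k : ℕ, (Cc * Ac ^ k) *ᵥ w = 0 := by
    intro w
    simp [hU, Submodule.mem_iInf, LinearMap.mem_ker, mulVecLin_apply]
  have hxcU : xc ∈ U := by
    rw [hmemU]
    intro k
    rw [← hmappow k, ← hmapmul, hmapvec, hall k]
    funext i
    simp
  have hxcne : xc ≠ 0 := by
    intro h
    apply hxne
    funext i
    have h2 : (x i : ℂ) = 0 := by simpa [hxc] using congrFun h i
    exact_mod_cast h2
  -- invariance of U under Ac
  have hinv : ∀ w ∈ U, Ac.mulVecLin w ∈ U := by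
    intro w hw
    rw [hmemU] at hw ⊢
    intro k
    rw [mulVecLin_apply, mulVec_mulVec, Matrix.mul_assoc, ← pow_succ]
    exact hw (k + 1)
  -- eigenvector of the restriction
  set g : Module.End ℂ U := Ac.mulVecLin.restrict hinv with hg
  have : Nontrivial U := by
    refine nontrivial_of_ne ⟨xc, hxcU⟩ 0 ?_
    intro h
    exact hxcne (by simpa using congrArg Subtype.val h)
  obtain ⟨μ, hμ⟩ := Module.End.exists_eigenvalue g
  obtain ⟨w, hw⟩ := hμ.exists_hasEigenvector
  set v : Fin n → ℂ := (w : Fin n → ℂ) with hv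
  have hvne : v ≠ 0 := fun h => hw.right (Subtype.ext h)
  have hAv : Ac *ᵥ v = μ • v := by
    have := congrArg Subtype.val hw.apply_eq_smul
    simpa [hg, LinearMap.restrict_coe_apply, mulVecLin_apply] using this
  have hCv : Cc *ᵥ v = 0 := by
    have := (hmemU v).mp w.2 0
    simpa using this
  have hvU : ∀ k : ℕ, (Cc * Ac ^ k) *ᵥ v = 0 := (hmemU v).mp w.2
  -- μ is in the spectrum of Ac
  have hre : 0 ≤ μ.re := hA μ (aux_eig_spectrum Ac μ v hvne hAv)
  -- powers act by μ^k on v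
  have hpowv : ∀ k : ℕ, Ac ^ k *ᵥ v = μ ^ k • v := by
    intro k
    induction k with
    | zero => simp
    | succ k ih =>
      rw [pow_succ, ← mulVec_mulVec, hAv, mulVec_smul, ih, smul_smul, pow_succ]
      ring_nf
  -- complexified Riccati equation
  have hAt : Aᵀ.map Complex.ofReal = Acᵀ := Matrix.transpose_map
  have hBt : Bᵀ.map Complex.ofReal = Bcᵀ := Matrix.transpose_map
  have hricc : Acᵀ * Pc + Pc * Ac - Pc * Bc * Bcᵀ * Pc + Qc = 0 := by
    have h := congrArg (fun M : Matrix (Fin n) (Fin n) ℝ => M.map Complex.ofReal) hric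
    rw [Matrix.map_add _ Complex.ofReal_add, Matrix.map_sub _ Complex.ofReal_sub,
      Matrix.map_add _ Complex.ofReal_add, hmapmul, hmapmul, hmapmul, hmapmul, hmapmul,
      Matrix.map_zero _ Complex.ofReal_zero, hAt, hBt] at h
    exact h
  -- quadratic form terms
  set p : ℂ := star v ⬝ᵥ (Pc *ᵥ v) with hp
  set q : ℂ := star v ⬝ᵥ (Qc *ᵥ v) with hqdef
  have hherm : Acᵀ = Acᴴ := by
    ext i j
    simp [conjTranspose_apply, hAc, map_apply, Complex.conj_ofReal]
  have hT1 : star v ⬝ᵥ ((Acᵀ * Pc) *ᵥ v) = (starRingEnd ℂ) μ * p := by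
    rw [← mulVec_mulVec, dotProduct_mulVec, hherm, ← star_mulVec, hAv, star_smul,
      smul_dotProduct]
    simp [hp, dotProduct_mulVec]
  have hT2 : star v ⬝ᵥ ((Pc * Ac) *ᵥ v) = μ * p := by
    rw [← mulVec_mulVec, hAv, mulVec_smul, dotProduct_smul, smul_eq_mul]
  have hCcEq : Bcᵀ * Pc = Cc := by
    rw [hCc, hCdef, hmapmul, hBt]
  have hT3 : star v ⬝ᵥ ((Pc * Bc * Bcᵀ * Pc) *ᵥ v) = 0 := by
    rw [Matrix.mul_assoc (Pc * Bc), hCcEq, ← mulVec_mulVec, hCv, mulVec_zero,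
      dotProduct_zero]
  have hE : (starRingEnd ℂ) μ * p + μ * p + q = 0 := by
    have h := congrArg (fun M : Matrix (Fin n) (Fin n) ℂ => star v ⬝ᵥ (M *ᵥ v)) hricc
    simp only [Matrix.add_mulVec, Matrix.sub_mulVec, dotProduct_add, dotProduct_sub,
      Matrix.zero_mulVec, dotProduct_zero] at h
    rw [hT1, hT2, hT3, ← hqdef] at h
    linear_combination h
  -- positivity of p.re
  set av : Fin n → ℝ := fun i => (v i).re with hav
  set bv : Fin n → ℝ := fun i => (v i).im with hbv
  have hpre : p.re = av ⬝ᵥ (P *ᵥ av) + bv ⬝ᵥ (P *ᵥ bv) := aux_re_quad P v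
  have habne : av ≠ 0 ∨ bv ≠ 0 := by
    by_contra hcon
    push_neg at hcon
    apply hvne
    funext i
    have h1 := congrFun hcon.1 i
    have h2 := congrFun hcon.2 i
    simp only [hav, hbv, Pi.zero_apply] at h1 h2
    exact Complex.ext (by simpa using h1) (by simpa using h2)
  have hppos : 0 < p.re := by
    have h1 : ∀ y : Fin n → ℝ, 0 ≤ y ⬝ᵥ (P *ᵥ y) := by
      intro y
      have := hP.posSemidef.dotProduct_mulVec_nonneg y
      simpa using this
    have h2 : ∀ y : Fin n → ℝ, y ≠ 0 → 0 < y ⬝ᵥ (P *ᵥ y) := by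
      intro y hy
      have := hP.dotProduct_mulVec_pos hy
      simpa using this
    rw [hpre]
    rcases habne with h | h
    · have := h2 av h
      have := h1 bv
      linarith
    · have := h2 bv h
      have := h1 av
      linarith
  -- q as a norm square
  set S : Matrix (Fin n) (Fin n) ℝ := (hQ.1.eigenvectorUnitary : Matrix (Fin n) (Fin n) ℝ) *
          diagonal ((RCLike.ofReal : ℝ → ℝ) ∘ Real.sqrt ∘ hQ.1.eigenvalues) *
          (star hQ.1.eigenvectorUnitary : Matrix (Fin n) (Fin n) ℝ) with hS
  set Sc : Matrix (Fin n) (Fin n) ℂ := S.map Complex.ofReal with hSc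
  have hSsymm : Sᵀ = S := by
    have h : S.IsHermitian := by
      rw [hS]
      refine isHermitian_mul_mul_conjTranspose _ ?_
      exact isHermitian_diagonal_of_self_adjoint _ (by ext i; simp)
    rwa [Matrix.IsHermitian, conjTranspose_eq_transpose_of_trivial] at h
  have hQSS : Q = S * S := by
    have hU : (star hQ.1.eigenvectorUnitary : Matrix (Fin n) (Fin n) ℝ) *
        (hQ.1.eigenvectorUnitary : Matrix (Fin n) (Fin n) ℝ) = 1 := Unitary.coe_star_mul_self _
    have hD : diagonal ((RCLike.ofReal : ℝ → ℝ) ∘ Real.sqrt ∘ hQ.1.eigenvalues) *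
        diagonal ((RCLike.ofReal : ℝ → ℝ) ∘ Real.sqrt ∘ hQ.1.eigenvalues)
        = diagonal ((RCLike.ofReal : ℝ → ℝ) ∘ hQ.1.eigenvalues) := by
      rw [diagonal_mul_diagonal]
      congr 1; funext i
      simp [Real.mul_self_sqrt (hQ.eigenvalues_nonneg i)]
    conv_lhs => rw [hQ.1.spectral_theorem, Unitary.conjStarAlgAut_apply]
    rw [hS]
    simp only [Matrix.mul_assoc]
    rw [← Matrix.mul_assoc _ _ (diagonal _ * _), hU, Matrix.one_mul,
      ← Matrix.mul_assoc (diagonal _) (diagonal _), hD]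
  have hScH : Scᴴ = Sc := by
    ext i j
    have h2 : S i j = S j i := congrFun (congrFun hSsymm j) i
    simp only [conjTranspose_apply, hSc, map_apply]
    rw [Complex.star_def, Complex.conj_ofReal, h2]
  have hqw : q = star (Sc *ᵥ v) ⬝ᵥ (Sc *ᵥ v) := by
    rw [hqdef, hQc, hQSS, hmapmul, ← hSc, ← mulVec_mulVec, dotProduct_mulVec,
      show star v ᵥ* Sc = star (Sc *ᵥ v) by rw [star_mulVec, hScH]]
  have hq0 : 0 ≤ q := by
    rw [hqw]
    exact dotProduct_star_self_nonneg _
  have hqre : 0 ≤ q.re ∧ q.im = 0 := by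
    have := Complex.le_def.mp hq0
    exact ⟨by simpa using this.1, by simpa using this.2.symm⟩
  -- real part of the Riccati identity
  have hEre := congrArg Complex.re hE
  simp only [Complex.add_re, Complex.mul_re, Complex.conj_re, Complex.conj_im,
    Complex.zero_re] at hEre
  have hqre0 : q.re = 0 := by
    have h2 : 2 * (μ.re * p.re) + q.re = 0 := by linarith [hEre]
    have h3 : 0 ≤ μ.re * p.re := mul_nonneg hre (le_of_lt hppos)
    linarith [hqre.1]
  have hqzero : q = 0 := Complex.ext (by simpa using hqre0) (by simpa using hqre.2)
  have hSv : Sc *ᵥ v = 0 := by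
    rw [hqw] at hqzero
    exact dotProduct_star_self_eq_zero.mp hqzero
  -- v is in the kernel of the observability matrix of (A, sqrt Q)
  have hSA : ∀ k : ℕ, ((S * A ^ k).map Complex.ofReal) *ᵥ v = 0 := by
    intro k
    rw [hmapmul, hmappow, ← hSc, ← mulVec_mulVec, hpowv, mulVec_smul, hSv, smul_zero]
  have hobs := (aux_rank_iff _).mp hobsQ
  have hA0 : av = 0 := by
    apply hobs
    funext qq
    have h := congrFun (aux_map_mulVec_re_im (S * A ^ (qq.1 : ℕ)) v (hSA qq.1)).1 qq.2
    simpa [mulVec, dotProduct, hS, hav] using h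
  have hB0 : bv = 0 := by
    apply hobs
    funext qq
    have h := congrFun (aux_map_mulVec_re_im (S * A ^ (qq.1 : ℕ)) v (hSA qq.1)).2 qq.2
    simpa [mulVec, dotProduct, hS, hbv] using h
  rcases habne with h | h
  · exact h hA0
  · exact h hB0
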